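/- Let 0 < k < n and let T be a tableau of shape k×(n−k). Then there exists a unique multiset M of elements of V*_{k,n} such that every two elements of M are nonnesting and the sum of the characteristic vectors of the elements of M (with multiplicity) equals T, i.e., Σ_{I ∈ M} χ_I = T. -/

import Mathlib

/-- Two arcs `(i < i')` and `(j < j')` cross if `i < j < i' < j'` or `j < i < j' < i'`. -/
def Cross (i i' j j' : ℕ) : Prop :=
  (i < j ∧ j < i' ∧ i' < j') ∨ (j < i ∧ i < j' ∧ j' < i')

/-- Two arcs `(i < i')` and `(j < j')` nest if `i < j < j' < i'` or `j < i < i' < j'`. -/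
def Nest (i i' j j' : ℕ) : Prop :=
  (i < j ∧ j < j' ∧ j' < i') ∨ (j < i ∧ i < i' ∧ i' < j')

/-- `I : Fin k → ℕ` represents an element of `V_{k,n}`: a strictly increasing
`k`-tuple with entries in `[n] = {1, …, n}`. -/
def IsVkn (n : ℕ) {k : ℕ} (I : Fin k → ℕ) : Prop :=
  StrictMono I ∧ ∀ a, 1 ≤ I a ∧ I a ≤ n

/-- `I, J ∈ V_{k,n}` are noncrossing if for all indices `a < b` such that
`I l = J l` for all `a < l < b`, the arcs `(I a < I b)` and `(J a < J b)` do not cross. -/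
def NonCrossing {k : ℕ} (I J : Fin k → ℕ) : Prop :=
  ∀ a b : Fin k, a < b → (∀ l : Fin k, a < l → l < b → I l = J l) →
    ¬ Cross (I a) (I b) (J a) (J b)

/-- `I, J ∈ V_{k,n}` are nonnesting if for all indices `a < b`
the arcs `(I a < I b)` and `(J a < J b)` do not nest. -/
def NonNesting {k : ℕ} (I J : Fin k → ℕ) : Prop :=
  ∀ a b : Fin k, a < b → ¬ Nest (I a) (I b) (J a) (J b)

/-- `x` is an entry of the tuple `I` (i.e. `x` belongs to `I` viewed as a subset of `[n]`). -/
def MemT {k : ℕ} (I : Fin k → ℕ) (x : ℕ) : Prop := ∃ a, I a = x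

/-- The characteristic vector `χ_I ∈ {0,1}^{[k]×[m]}` (`m = n−k`), given in 0-based
coordinates: `χ_I(a,b) = 1` iff `i_{a+1} ≤ (a+1)+(b+1)−1 = a+b+1`. -/
def chi (m : ℕ) {k : ℕ} (I : Fin k → ℕ) : Fin k × Fin m → ℕ :=
  fun p => if I p.1 ≤ p.1.val + p.2.val + 1 then 1 else 0

/-- The top element `(n−k+1, n−k+2, …, n)` of `V_{k,n}`. -/
def TopVec (n k : ℕ) : Fin k → ℕ := fun a => n - k + 1 + a.val

/-- A tableau of shape `k × m`: weakly increasing along rows from left to right and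
along columns from bottom to top (rows labeled from top to bottom). -/
def IsTableau {k m : ℕ} (T : Fin k × Fin m → ℕ) : Prop :=
  (∀ a : Fin k, ∀ b b' : Fin m, b ≤ b' → T (a, b) ≤ T (a, b')) ∧
  (∀ a a' : Fin k, ∀ b : Fin m, a ≤ a' → T (a', b) ≤ T (a, b))

namespace Stmt7Aux


lemma smono_add {k : ℕ} {I : Fin k → ℕ} (hI : StrictMono I) :
    ∀ d (a b : Fin k), b.val = a.val + d → I a + d ≤ I b := by
  intro d
  induction d with
  | zero =>
    intro a b h
    have : a = b := Fin.ext (by omega)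
    simp [this]
  | succ d ih =>
    intro a b h
    have hb' : a.val + d < k := by have := b.isLt; omega
    have h1 := ih a ⟨a.val + d, hb'⟩ rfl
    have h2 : I ⟨a.val + d, hb'⟩ < I b := hI (by simp [Fin.lt_def, h])
    omega

lemma vkn_lower {n k : ℕ} {I : Fin k → ℕ} (h : IsVkn n I) (a : Fin k) :
    a.val + 1 ≤ I a := by
  have hk : 0 < k := a.pos
  have h1 := smono_add h.1 a.val ⟨0, hk⟩ a (by simp)
  have h2 := (h.2 ⟨0, hk⟩).1
  omega

lemma vkn_upper {n k : ℕ} (hkn : k ≤ n) {I : Fin k → ℕ} (h : IsVkn n I) (a : Fin k) :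
    I a ≤ (n - k) + a.val + 1 := by
  have hk : 0 < k := a.pos
  have h1 := smono_add h.1 (k - 1 - a.val) a ⟨k - 1, by omega⟩ (by have := a.isLt; simp; omega)
  have h2 := (h.2 ⟨k - 1, by omega⟩).2
  have := a.isLt
  omega

lemma chi_inj {n k : ℕ} (hkn : k ≤ n) {I J : Fin k → ℕ} (hI : IsVkn n I) (hJ : IsVkn n J)
    (h : chi (n - k) I = chi (n - k) J) : I = J := by
  have key : ∀ (A B : Fin k → ℕ), IsVkn n A → IsVkn n B →
      chi (n - k) A = chi (n - k) B → ∀ a : Fin k, ¬ (A a < B a) := by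
    intro A B hA hB hAB a hlt
    have h1 := vkn_lower hA a
    have h2 := vkn_upper hkn hB a
    have hb : A a - a.val - 1 < n - k := by omega
    have := congrFun hAB (a, ⟨A a - a.val - 1, hb⟩)
    simp only [chi] at this
    rw [if_pos (show A a ≤ a.val + (A a - a.val - 1) + 1 by omega),
      if_neg (show ¬ B a ≤ a.val + (A a - a.val - 1) + 1 by omega)] at this
    exact absurd this one_ne_zero
  funext a
  have h1 := key I J hI hJ h a
  have h2 := key J I hJ hI h.symm a
  omega

lemma chi_ne_zero {n k : ℕ} (hkn : k < n) {I : Fin k → ℕ} (hI : IsVkn n I)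
    (hne : I ≠ TopVec n k) : ∃ p, chi (n - k) I p = 1 := by
  have hm : 0 < n - k := by omega
  have : ∃ a, I a ≠ TopVec n k a := by
    by_contra hc
    push_neg at hc
    exact hne (funext hc)
  obtain ⟨a, ha⟩ := this
  have h2 := vkn_upper (le_of_lt hkn) hI a
  simp only [TopVec] at ha
  refine ⟨(a, ⟨n - k - 1, by omega⟩), ?_⟩
  simp only [chi]
  rw [if_pos (show I a ≤ a.val + (n - k - 1) + 1 by omega)]

lemma chi_mono {m k : ℕ} {I J : Fin k → ℕ} (h : ∀ a, I a ≤ J a) (p : Fin k × Fin m) :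
    chi m J p ≤ chi m I p := by
  simp only [chi]
  split_ifs with h1 h2 <;> try omega
  exact absurd (le_trans (h p.1) h1) h2

lemma nonNesting_of_comp {k : ℕ} {I J : Fin k → ℕ}
    (h : (∀ a, I a ≤ J a) ∨ (∀ a, J a ≤ I a)) : NonNesting I J := by
  intro a b _ hnest
  rcases hnest with ⟨_, _, h3⟩ | ⟨h1, _, _⟩ <;> rcases h with hc | hc
  · exact absurd h3 (not_lt.2 (hc b))
  · exact absurd ‹I a < J a› (not_lt.2 (hc a))
  · exact absurd h1 (not_lt.2 (hc a))
  · exact absurd ‹I b < J b› (not_lt.2 (hc b))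

lemma comp_of_nonNesting {k : ℕ} {I J : Fin k → ℕ} (hI : StrictMono I) (hJ : StrictMono J)
    (h : NonNesting I J) : (∀ a, I a ≤ J a) ∨ (∀ a, J a ≤ I a) := by
  by_contra hc
  push_neg at hc
  obtain ⟨⟨b, hb⟩, ⟨a, ha⟩⟩ := hc
  rcases lt_trichotomy a b with hab | hab | hab
  · exact h a b hab (Or.inl ⟨ha, hJ hab, hb⟩)
  · subst hab; omega
  · exact h b a hab (Or.inr ⟨hb, hI hab, ha⟩)

lemma exists_min {k : ℕ} (M : Multiset (Fin k → ℕ)) (hM : M ≠ 0)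
    (hcomp : ∀ I ∈ M, ∀ J ∈ M, (∀ a, I a ≤ J a) ∨ (∀ a, J a ≤ I a)) :
    ∃ I₀ ∈ M, ∀ J ∈ M, ∀ a, I₀ a ≤ J a := by
  induction M using Multiset.induction with
  | empty => exact absurd rfl hM
  | cons I M' ih =>
    by_cases hM' : M' = 0
    · subst hM'
      refine ⟨I, Multiset.mem_cons_self _ _, ?_⟩
      intro J hJ a
      rw [Multiset.mem_cons] at hJ
      simp only [Multiset.notMem_zero, or_false] at hJ
      rw [hJ]
    · obtain ⟨I₀, hI₀m, hI₀⟩ := ih hM' (fun A hA B hB =>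
        hcomp A (Multiset.mem_cons_of_mem hA) B (Multiset.mem_cons_of_mem hB))
      rcases hcomp I (Multiset.mem_cons_self _ _) I₀ (Multiset.mem_cons_of_mem hI₀m) with hc | hc
      · refine ⟨I, Multiset.mem_cons_self _ _, ?_⟩
        intro J hJ a
        rcases Multiset.mem_cons.1 hJ with rfl | hJ
        · exact le_refl _
        · exact le_trans (hc a) (hI₀ J hJ a)
      · refine ⟨I₀, Multiset.mem_cons_of_mem hI₀m, ?_⟩
        intro J hJ a
        rcases Multiset.mem_cons.1 hJ with rfl | hJ
        · exact hc a
        · exact hI₀ J hJ a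

lemma map_sum_apply {α β : Type*} (M : Multiset α) (f : α → β → ℕ) (p : β) :
    (M.map f).sum p = (M.map fun x => f x p).sum := by
  induction M using Multiset.induction with
  | empty => simp
  | cons I M' ih => simp [ih]




/-- The number of entries `< s` in row `a`. -/
def zrow {k m : ℕ} (T : Fin k × Fin m → ℕ) (s : ℕ) (a : Fin k) : ℕ :=
  (Finset.univ.filter (fun b : Fin m => T (a, b) < s)).card

def lvl {k m : ℕ} (T : Fin k × Fin m → ℕ) (s : ℕ) : Fin k → ℕ :=
  fun a => a.val + 1 + zrow T s a

lemma zrow_le {k m : ℕ} (T : Fin k × Fin m → ℕ) (s : ℕ) (a : Fin k) : zrow T s a ≤ m := by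
  have := Finset.card_filter_le (Finset.univ : Finset (Fin m)) (fun b => T (a, b) < s)
  simpa [zrow] using this

lemma zrow_le_iff {k m : ℕ} {T : Fin k × Fin m → ℕ} (hT : IsTableau T) (s : ℕ)
    (a : Fin k) (b : Fin m) : zrow T s a ≤ b.val ↔ s ≤ T (a, b) := by
  constructor
  · intro h
    by_contra hc
    push_neg at hc
    have hsub : Finset.Iic b ⊆ Finset.univ.filter (fun b' => T (a, b') < s) := by
      intro b' hb'
      rw [Finset.mem_Iic] at hb'
      rw [Finset.mem_filter]
      exact ⟨Finset.mem_univ _, lt_of_le_of_lt (hT.1 a b' b hb') hc⟩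
    have := Finset.card_le_card hsub
    rw [Fin.card_Iic] at this
    unfold zrow at h
    omega
  · intro h
    have hsub : Finset.univ.filter (fun b' => T (a, b') < s) ⊆ Finset.Iio b := by
      intro b' hb'
      rw [Finset.mem_filter] at hb'
      rw [Finset.mem_Iio]
      by_contra hc
      push_neg at hc
      exact absurd (lt_of_le_of_lt (le_trans h (hT.1 a b b' hc)) hb'.2) (lt_irrefl _)
    have := Finset.card_le_card hsub
    rw [Fin.card_Iio] at this
    unfold zrow
    omega

lemma chi_lvl {k m : ℕ} {T : Fin k × Fin m → ℕ} (hT : IsTableau T) (s : ℕ)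
    (p : Fin k × Fin m) : chi m (lvl T s) p = if s ≤ T p then 1 else 0 := by
  have h := zrow_le_iff hT s p.1 p.2
  simp only [chi, lvl]
  by_cases hc : s ≤ T p
  · have h3 := h.2 (by simpa using hc); rw [if_pos hc]; exact if_pos (by omega)
  · have h3 : ¬ zrow T s p.1 ≤ p.2.val := fun hle => hc (by simpa using h.1 hle); rw [if_neg hc]; exact if_neg (by omega)

lemma zrow_mono_row {k m : ℕ} {T : Fin k × Fin m → ℕ} (hT : IsTableau T) (s : ℕ)
    {a a' : Fin k} (h : a ≤ a') : zrow T s a ≤ zrow T s a' := by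
  apply Finset.card_le_card
  intro b hb
  rw [Finset.mem_filter] at hb ⊢
  exact ⟨Finset.mem_univ _, lt_of_le_of_lt (hT.2 a a' b h) hb.2⟩

lemma zrow_mono_s {k m : ℕ} (T : Fin k × Fin m → ℕ) {s s' : ℕ} (h : s ≤ s') (a : Fin k) :
    zrow T s a ≤ zrow T s' a := by
  apply Finset.card_le_card
  intro b hb
  rw [Finset.mem_filter] at hb ⊢
  exact ⟨Finset.mem_univ _, lt_of_lt_of_le hb.2 h⟩

lemma lvl_isVkn {n k : ℕ} (hk : 0 < k) (hkn : k < n) {T : Fin k × Fin (n - k) → ℕ}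
    (hT : IsTableau T) (s : ℕ) : IsVkn n (lvl T s) := by
  constructor
  · intro a a' haa'
    have h1 := zrow_mono_row hT s (le_of_lt haa')
    have h2 : a.val < a'.val := haa'
    simp only [lvl]
    omega
  · intro a
    have h1 := zrow_le T s a
    have h2 := a.isLt
    simp only [lvl]
    omega

lemma lvl_ne_top {n k : ℕ} (hkn : k < n) {T : Fin k × Fin (n - k) → ℕ} (hT : IsTableau T)
    {s : ℕ} (hs : ∃ p, s ≤ T p) : lvl T s ≠ TopVec n k := by
  obtain ⟨⟨a, b⟩, hp⟩ := hs
  intro hc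
  have h1 := congrFun hc a
  simp only [lvl, TopVec] at h1
  have hz : zrow T s a ≤ b.val := (zrow_le_iff hT s a b).2 hp
  have := b.isLt
  omega


lemma mem_le_sum {m : Multiset ℕ} {x : ℕ} (h : x ∈ m) : x ≤ m.sum := by
  rw [← Multiset.cons_erase h, Multiset.sum_cons]
  exact Nat.le_add_right _ _

/-- All elements' chi values are bounded by the sum. -/
lemma chi_le_T {n k : ℕ} {M : Multiset (Fin k → ℕ)} {T : Fin k × Fin (n - k) → ℕ}
    (hsum : (M.map (chi (n - k))).sum = T) {I : Fin k → ℕ} (hI : I ∈ M)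
    (p : Fin k × Fin (n - k)) : chi (n - k) I p ≤ T p := by
  rw [← hsum, map_sum_apply]
  exact mem_le_sum (Multiset.mem_map_of_mem _ hI)

lemma empty_of_zero {n k : ℕ} (hkn : k < n) {M : Multiset (Fin k → ℕ)}
    {T : Fin k × Fin (n - k) → ℕ}
    (hmem : ∀ I ∈ M, IsVkn n I ∧ I ≠ TopVec n k)
    (hsum : (M.map (chi (n - k))).sum = T) (hz : ∀ p, T p = 0) : M = 0 := by
  by_contra hc
  obtain ⟨I, hI⟩ := Multiset.exists_mem_of_ne_zero hc
  obtain ⟨p, hp⟩ := chi_ne_zero hkn (hmem I hI).1 (hmem I hI).2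
  have := chi_le_T hsum hI p
  rw [hp, hz p] at this
  omega

lemma chi_le_one {m k : ℕ} (I : Fin k → ℕ) (p : Fin k × Fin m) : chi m I p ≤ 1 := by
  simp only [chi]
  split_ifs <;> omega

lemma min_chi {n k : ℕ} {M : Multiset (Fin k → ℕ)} {T : Fin k × Fin (n - k) → ℕ}
    (hsum : (M.map (chi (n - k))).sum = T) {I₀ : Fin k → ℕ} (hI₀ : I₀ ∈ M)
    (hmin : ∀ J ∈ M, ∀ a, I₀ a ≤ J a) (p : Fin k × Fin (n - k)) :
    chi (n - k) I₀ p = if 1 ≤ T p then 1 else 0 := by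
  by_cases h1 : 1 ≤ T p
  · rw [if_pos h1]
    have hex : ∃ J ∈ M, chi (n - k) J p ≠ 0 := by
      by_contra hc
      push_neg at hc
      have : T p = 0 := by
        rw [← hsum, map_sum_apply]
        apply Multiset.sum_eq_zero
        intro x hx
        obtain ⟨J, hJ, rfl⟩ := Multiset.mem_map.1 hx
        exact hc J hJ
      omega
    obtain ⟨J, hJ, hJne⟩ := hex
    have h2 := chi_mono (hmin J hJ) p
    have h3 := chi_le_one I₀ p
    omega
  · rw [if_neg h1]
    have := chi_le_T hsum hI₀ p
    omega

lemma uniq {n k : ℕ} (hk : 0 < k) (hkn : k < n) :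
    ∀ (N : ℕ) (T : Fin k × Fin (n - k) → ℕ) (M M' : Multiset (Fin k → ℕ)),
      M.card ≤ N →
      ((∀ I ∈ M, IsVkn n I ∧ I ≠ TopVec n k) ∧ (∀ I ∈ M, ∀ J ∈ M, NonNesting I J) ∧
        (M.map (chi (n - k))).sum = T) →
      ((∀ I ∈ M', IsVkn n I ∧ I ≠ TopVec n k) ∧ (∀ I ∈ M', ∀ J ∈ M', NonNesting I J) ∧
        (M'.map (chi (n - k))).sum = T) →
      M = M' := by
  intro N
  induction N with
  | zero =>
    intro T M M' hcard ⟨hmem, hnn, hsum⟩ ⟨hmem', hnn', hsum'⟩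
    have hM : M = 0 := Multiset.card_eq_zero.1 (Nat.le_zero.1 hcard)
    subst hM
    have hz : ∀ p, T p = 0 := by
      intro p
      rw [← hsum]
      simp
    exact (empty_of_zero hkn hmem' hsum' hz).symm
  | succ N ih =>
    intro T M M' hcard ⟨hmem, hnn, hsum⟩ ⟨hmem', hnn', hsum'⟩
    by_cases hM : M = 0
    · subst hM
      have hz : ∀ p, T p = 0 := by
        intro p
        rw [← hsum]
        simp
      exact (empty_of_zero hkn hmem' hsum' hz).symm
    · -- M is nonempty, hence T has a positive entry, hence M' is nonempty
      have hM' : M' ≠ 0 := by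
        intro hc
        apply hM
        subst hc
        have hz : ∀ p, T p = 0 := by
          intro p
          rw [← hsum']
          simp
        exact empty_of_zero hkn hmem hsum hz
      obtain ⟨I₀, hI₀m, hI₀⟩ := exists_min M hM (fun I hI J hJ =>
        comp_of_nonNesting (hmem I hI).1.1 (hmem J hJ).1.1 (hnn I hI J hJ))
      obtain ⟨I₀', hI₀m', hI₀'⟩ := exists_min M' hM' (fun I hI J hJ =>
        comp_of_nonNesting (hmem' I hI).1.1 (hmem' J hJ).1.1 (hnn' I hI J hJ))
      have hchieq : chi (n - k) I₀ = chi (n - k) I₀' := by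
        funext p
        rw [min_chi hsum hI₀m hI₀ p, min_chi hsum' hI₀m' hI₀' p]
      have heq : I₀ = I₀' :=
        chi_inj (le_of_lt hkn) (hmem I₀ hI₀m).1 (hmem' I₀' hI₀m').1 hchieq
      subst heq
      -- remove I₀ from both and recurse
      have hrest : ∀ (W : Multiset (Fin k → ℕ)), I₀ ∈ W →
          (W.map (chi (n - k))).sum = T →
          (∀ J ∈ W, ∀ a, I₀ a ≤ J a) →
          ((W.erase I₀).map (chi (n - k))).sum = fun p => T p - 1 := by
        intro W hIW hsumW hminW
        funext p
        have hconsW : I₀ ::ₘ W.erase I₀ = W := Multiset.cons_erase hIW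
        have h1 : chi (n - k) I₀ p + ((W.erase I₀).map (chi (n - k))).sum p = T p := by
          rw [← hsumW, ← hconsW]
          simp [map_sum_apply]
        have h2 := min_chi hsumW hIW hminW p
        rw [map_sum_apply] at h1 ⊢
        split_ifs at h2 <;> omega
      have hs1 := hrest M hI₀m hsum hI₀
      have hs2 := hrest M' hI₀m' hsum' hI₀'
      have hcards : (M.erase I₀).card ≤ N := by
        rw [Multiset.card_erase_of_mem hI₀m, Nat.pred_eq_sub_one]
        have hpos : 0 < M.card := Multiset.card_pos.2 hM
        omega
      have herased : M.erase I₀ = M'.erase I₀ := by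
        apply ih (fun p => T p - 1) _ _ hcards
        · exact ⟨fun I hI => hmem I (Multiset.mem_of_mem_erase hI),
            fun I hI J hJ => hnn I (Multiset.mem_of_mem_erase hI) J (Multiset.mem_of_mem_erase hJ),
            hs1⟩
        · exact ⟨fun I hI => hmem' I (Multiset.mem_of_mem_erase hI),
            fun I hI J hJ => hnn' I (Multiset.mem_of_mem_erase hI) J (Multiset.mem_of_mem_erase hJ),
            hs2⟩
      rw [← Multiset.cons_erase hI₀m, ← Multiset.cons_erase hI₀m', herased]

lemma lvl_le_lvl {k m : ℕ} (T : Fin k × Fin m → ℕ) {s s' : ℕ} (h : s ≤ s') (a : Fin k) :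
    lvl T s a ≤ lvl T s' a := by
  simp only [lvl]
  have := zrow_mono_s T h a
  omega

end Stmt7Aux

open Stmt7Aux in
theorem stmt7 {n k : ℕ} (hk : 0 < k) (hkn : k < n)
    (T : Fin k × Fin (n - k) → ℕ) (hT : IsTableau T) :
    ∃! M : Multiset (Fin k → ℕ),
      (∀ I ∈ M, IsVkn n I ∧ I ≠ TopVec n k) ∧
      (∀ I ∈ M, ∀ J ∈ M, NonNesting I J) ∧
      (M.map (chi (n - k))).sum = T := by
  haveI hne : Nonempty (Fin k × Fin (n - k)) := ⟨(⟨0, hk⟩, ⟨0, by omega⟩)⟩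
  set t := Finset.univ.sup T with ht_def
  have ht : ∀ p, T p ≤ t := fun p => Finset.le_sup (Finset.mem_univ p)
  have htex : ∃ p, T p = t := by
    obtain ⟨p, _, hp⟩ := Finset.exists_mem_eq_sup Finset.univ Finset.univ_nonempty T
    exact ⟨p, hp.symm⟩
  set M₀ : Multiset (Fin k → ℕ) := (Multiset.range t).map (fun s => lvl T (s + 1)) with hM₀
  have hc1 : ∀ I ∈ M₀, IsVkn n I ∧ I ≠ TopVec n k := by
    intro I hI
    obtain ⟨s, hs, rfl⟩ := Multiset.mem_map.1 hI
    rw [Multiset.mem_range] at hs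
    obtain ⟨p, hp⟩ := htex
    exact ⟨lvl_isVkn hk hkn hT _, lvl_ne_top hkn hT ⟨p, by omega⟩⟩
  have hc2 : ∀ I ∈ M₀, ∀ J ∈ M₀, NonNesting I J := by
    intro I hI J hJ
    obtain ⟨s, hs, rfl⟩ := Multiset.mem_map.1 hI
    obtain ⟨s', hs', rfl⟩ := Multiset.mem_map.1 hJ
    apply nonNesting_of_comp
    rcases le_total s s' with h | h
    · exact Or.inl (lvl_le_lvl T (by omega))
    · exact Or.inr (lvl_le_lvl T (by omega))
  have hc3 : (M₀.map (chi (n - k))).sum = T := by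
    funext p
    rw [hM₀, Multiset.map_map, map_sum_apply]
    have hcong : (Multiset.range t).map (fun s => (chi (n - k) ∘ fun s => lvl T (s + 1)) s p)
        = (Multiset.range t).map (fun s => if s + 1 ≤ T p then 1 else 0) := by
      apply Multiset.map_congr rfl
      intro s _
      exact chi_lvl hT (s + 1) p
    rw [hcong]
    have hfin : ((Multiset.range t).map (fun s => if s + 1 ≤ T p then 1 else 0)).sum
        = ∑ s ∈ Finset.range t, (if s + 1 ≤ T p then 1 else 0) := rfl
    rw [hfin, Finset.sum_boole]
    have hfil : (Finset.range t).filter (fun s => s + 1 ≤ T p) = Finset.range (T p) := by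
      ext x
      simp only [Finset.mem_filter, Finset.mem_range]
      have := ht p
      omega
    rw [hfil, Finset.card_range]
    simp
  refine ⟨M₀, ⟨hc1, hc2, hc3⟩, ?_⟩
  intro M' hM'
  exact uniq hk hkn M'.card T M' M₀ le_rfl hM' ⟨hc1, hc2, hc3⟩
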